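/- Let I(α) = ∫₀^α (√α/√(α−s)) (1+s²)^{-5/4} ds and J(α) = ∫₀^α (√α/√(α−s)) · s (1+s²)^{-5/4} ds for α > 0, let c₀ = ∫_{-∞}^{∞} (1+t²)^{-5/4} dt and c_* = 2/c₀. Then J(α)/(2 I(α)) → c_* as α → ∞. -/

import Mathlib

open Real MeasureTheory Filter

/-- `I(α) = ∫₀^α (√α/√(α−s)) (1+s²)^{-5/4} ds`. -/
noncomputable def Ifun (α : ℝ) : ℝ :=
  ∫ s in (0:ℝ)..α, (Real.sqrt α / Real.sqrt (α - s)) * (1 + s ^ 2) ^ (-(5:ℝ)/4)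

/-- `J(α) = ∫₀^α (√α/√(α−s)) · s (1+s²)^{-5/4} ds`. -/
noncomputable def Jfun (α : ℝ) : ℝ :=
  ∫ s in (0:ℝ)..α, (Real.sqrt α / Real.sqrt (α - s)) * (s * (1 + s ^ 2) ^ (-(5:ℝ)/4))

/-- `c₀ = ∫_ℝ (1+t²)^{-5/4} dt`. -/
noncomputable def c₀ : ℝ := ∫ t : ℝ, (1 + t ^ 2) ^ (-(5:ℝ)/4)

/-- `c_* = 2/c₀`. -/
noncomputable def cstar : ℝ := 2 / c₀

open Set

lemma one_add_sq_pos (s : ℝ) : (0:ℝ) < 1 + s ^ 2 := by positivity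

lemma g1_cont : Continuous (fun s : ℝ => (1 + s ^ 2) ^ (-(5:ℝ)/4)) := by
  apply Continuous.rpow_const (by continuity)
  intro s; exact Or.inl (one_add_sq_pos s).ne'

lemma g1_pos (s : ℝ) : 0 < (1 + s ^ 2) ^ (-(5:ℝ)/4) :=
  Real.rpow_pos_of_pos (one_add_sq_pos s) _

lemma g1_le_one (s : ℝ) : (1 + s ^ 2) ^ (-(5:ℝ)/4) ≤ 1 := by
  apply Real.rpow_le_one_of_one_le_of_nonpos
  · nlinarith [sq_nonneg s]
  · norm_num

lemma g1_int : Integrable (fun s : ℝ => (1 + s ^ 2) ^ (-(5:ℝ)/4)) := by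
  apply integrable_inv_one_add_sq.mono (g1_cont.aestronglyMeasurable)
  refine Filter.Eventually.of_forall (fun s => ?_)
  rw [Real.norm_eq_abs, Real.norm_eq_abs, abs_of_pos (g1_pos s),
    abs_of_pos (by positivity : (0:ℝ) < (1 + s^2)⁻¹)]
  rw [← Real.rpow_neg_one (1 + s ^ 2)]
  apply Real.rpow_le_rpow_of_exponent_le (by nlinarith [sq_nonneg s])
  norm_num

lemma g1_decay {s : ℝ} (hs : 1 ≤ s) : (1 + s ^ 2) ^ (-(5:ℝ)/4) ≤ s ^ (-(3:ℝ)/2) := by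
  calc (1 + s ^ 2) ^ (-(5:ℝ)/4) ≤ (1 + s ^ 2) ^ (-(3:ℝ)/4) := by
        apply Real.rpow_le_rpow_of_exponent_le (by nlinarith) (by norm_num)
    _ ≤ (s ^ 2) ^ (-(3:ℝ)/4) := by
        apply Real.rpow_le_rpow_of_nonpos (by positivity) (by nlinarith) (by norm_num)
    _ = s ^ (-(3:ℝ)/2) := by
        rw [← Real.rpow_natCast s 2, ← Real.rpow_mul (by linarith)]
        norm_num

lemma g2_nonneg {s : ℝ} (hs : 0 ≤ s) : 0 ≤ s * (1 + s ^ 2) ^ (-(5:ℝ)/4) := by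
  positivity

lemma g2_le_one {s : ℝ} (hs : 0 ≤ s) : s * (1 + s ^ 2) ^ (-(5:ℝ)/4) ≤ 1 := by
  rcases le_or_gt s 1 with h | h
  · calc s * (1 + s ^ 2) ^ (-(5:ℝ)/4) ≤ 1 * 1 :=
        mul_le_mul h (g1_le_one s) (g1_pos s).le one_pos.le
    _ = 1 := by ring
  · calc s * (1 + s ^ 2) ^ (-(5:ℝ)/4) ≤ s * s ^ (-(3:ℝ)/2) :=
        mul_le_mul_of_nonneg_left (g1_decay h.le) hs
    _ = s ^ (1 + (-(3:ℝ)/2)) := by rw [Real.rpow_add (by linarith), Real.rpow_one]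
    _ ≤ 1 := Real.rpow_le_one_of_one_le_of_nonpos h.le (by norm_num)

lemma g2_decay {s : ℝ} (hs : 1 ≤ s) : s * (1 + s ^ 2) ^ (-(5:ℝ)/4) ≤ s ^ (-(3:ℝ)/2) := by
  have h2 : (1 + s ^ 2) ^ (-(5:ℝ)/4) ≤ (s ^ 2) ^ (-(5:ℝ)/4) := by
    apply Real.rpow_le_rpow_of_nonpos (by positivity) (by nlinarith) (by norm_num)
  calc s * (1 + s ^ 2) ^ (-(5:ℝ)/4) ≤ s * (s ^ 2) ^ (-(5:ℝ)/4) :=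
      mul_le_mul_of_nonneg_left h2 (by linarith)
    _ = s ^ (1 + (2 * (-(5:ℝ)/4))) := by
        rw [← Real.rpow_natCast s 2, ← Real.rpow_mul (by linarith),
          Real.rpow_add (by linarith), Real.rpow_one]
        norm_num
    _ = s ^ (-(3:ℝ)/2) := by norm_num

lemma antideriv_hasDerivAt {s : ℝ} :
    HasDerivAt (fun x : ℝ => -2 * (1 + x ^ 2) ^ (-(1:ℝ)/4))
      (s * (1 + s ^ 2) ^ (-(5:ℝ)/4)) s := by
  have h1 : HasDerivAt (fun x : ℝ => 1 + x ^ 2) (2 * s) s := by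
    simpa using ((hasDerivAt_pow 2 s).const_add 1)
  have h2 : HasDerivAt (fun y : ℝ => y ^ (-(1:ℝ)/4))
      ((-(1:ℝ)/4) * (1 + s ^ 2) ^ ((-(1:ℝ)/4) - 1)) (1 + s ^ 2) :=
    Real.hasDerivAt_rpow_const (Or.inl (one_add_sq_pos s).ne')
  have := (h2.comp s h1).const_mul (-2 : ℝ)
  refine this.congr_deriv ?_
  have : (-(1:ℝ)/4) - 1 = -(5:ℝ)/4 := by norm_num
  rw [this]; ring

lemma antideriv_tendsto :
    Tendsto (fun x : ℝ => -2 * (1 + x ^ 2) ^ (-(1:ℝ)/4)) atTop (nhds 0) := by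
  have h1 : Tendsto (fun x : ℝ => 1 + x ^ 2) atTop atTop := by
    apply tendsto_atTop_add_const_left
    exact tendsto_pow_atTop (by norm_num)
  have h2 : Tendsto (fun y : ℝ => y ^ (-(1:ℝ)/4)) atTop (nhds 0) := by
    have := tendsto_rpow_neg_atTop (y := (1:ℝ)/4) (by norm_num)
    convert this using 2; norm_num
  have := (h2.comp h1).const_mul (-2 : ℝ)
  simpa using this

lemma g2_intOn : IntegrableOn (fun s : ℝ => s * (1 + s ^ 2) ^ (-(5:ℝ)/4)) (Ioi 0) := by
  apply integrableOn_Ioi_deriv_of_nonneg (g' := fun s => s * (1 + s ^ 2) ^ (-(5:ℝ)/4))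
    (antideriv_hasDerivAt.continuousAt.continuousWithinAt)
    (fun x _ => antideriv_hasDerivAt)
    (fun x hx => g2_nonneg (le_of_lt hx)) antideriv_tendsto

lemma g2_integral : ∫ s in Ioi (0:ℝ), s * (1 + s ^ 2) ^ (-(5:ℝ)/4) = 2 := by
  rw [integral_Ioi_of_hasDerivAt_of_nonneg
    (antideriv_hasDerivAt.continuousAt.continuousWithinAt)
    (fun x _ => antideriv_hasDerivAt)
    (fun x hx => g2_nonneg (le_of_lt hx)) antideriv_tendsto]
  norm_num

lemma c0_eq : c₀ = 2 * ∫ s in Ioi (0:ℝ), (1 + s ^ 2) ^ (-(5:ℝ)/4) := by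
  rw [c₀, ← integral_comp_abs (f := fun x => (1 + x ^ 2) ^ (-(5:ℝ)/4))]
  congr 1; ext t; rw [sq_abs]

lemma c0_pos : 0 < c₀ := by
  rw [c0_eq]
  have : 0 < ∫ s in Ioi (0:ℝ), (1 + s ^ 2) ^ (-(5:ℝ)/4) := by
    apply setIntegral_pos_iff_support_of_nonneg_ae ?_ (g1_int.integrableOn) |>.2
    · have hsupp : Function.support (fun s : ℝ => (1 + s ^ 2) ^ (-(5:ℝ)/4)) = Set.univ :=
        Set.eq_univ_of_forall fun s => (g1_pos s).ne'
      rw [hsupp, Set.univ_inter, Real.volume_Ioi]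
      exact ENNReal.zero_lt_top
    · exact Filter.Eventually.of_forall (fun s => (g1_pos s).le)
  linarith

lemma div_sqrt_eq {a x : ℝ} (hx : 0 ≤ x) :
    a / Real.sqrt x = a * x ^ (-(1:ℝ)/2) := by
  rw [div_eq_mul_inv, Real.sqrt_eq_rpow, ← Real.rpow_neg hx]
  norm_num

lemma weight_meas (α : ℝ) : Measurable (fun s : ℝ => Real.sqrt α / Real.sqrt (α - s)) :=
  measurable_const.div
    (Real.continuous_sqrt.measurable.comp (measurable_const.sub measurable_id))

lemma weight_nonneg (α s : ℝ) : 0 ≤ Real.sqrt α / Real.sqrt (α - s) :=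
  div_nonneg (Real.sqrt_nonneg _) (Real.sqrt_nonneg _)

lemma weight_le_sqrt_two {α s : ℝ} (hα : 0 < α) (hs : s ≤ α / 2) :
    Real.sqrt α / Real.sqrt (α - s) ≤ Real.sqrt 2 := by
  have h2 : (0:ℝ) < α - s := by linarith
  rw [div_le_iff₀ (Real.sqrt_pos.2 h2), ← Real.sqrt_mul (by norm_num : (0:ℝ) ≤ 2)]
  apply Real.sqrt_le_sqrt
  linarith

lemma weight_tendsto {s : ℝ} (hs : 0 ≤ s) :
    Tendsto (fun α : ℝ => Real.sqrt α / Real.sqrt (α - s)) atTop (nhds 1) := by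
  have h0 : Tendsto (fun α : ℝ => s / (α - s)) atTop (nhds 0) :=
    Tendsto.div_atTop tendsto_const_nhds (tendsto_atTop_add_const_right _ (-s) tendsto_id)
  have h1 : Tendsto (fun α : ℝ => α / (α - s)) atTop (nhds 1) := by
    have := tendsto_const_nhds (x := (1:ℝ)) (f := atTop) |>.add h0
    rw [add_zero] at this
    apply this.congr'
    filter_upwards [eventually_gt_atTop s] with α hα
    have : α - s ≠ 0 := by linarith
    field_simp; ring
  have h2 := (Real.continuous_sqrt.continuousAt (x := (1:ℝ))).tendsto.comp h1
  rw [Real.sqrt_one] at h2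
  apply h2.congr'
  filter_upwards [eventually_gt_atTop s, eventually_ge_atTop (0:ℝ)] with α h h'
  simp only [Function.comp]
  rw [Real.sqrt_div h']

lemma intInt_left {α : ℝ} (hα : 0 < α) {g : ℝ → ℝ} (hc : Continuous g) :
    IntervalIntegrable (fun s => Real.sqrt α / Real.sqrt (α - s) * g s) volume 0 (α/2) := by
  apply ContinuousOn.intervalIntegrable
  apply ContinuousOn.mul ?_ hc.continuousOn
  apply ContinuousOn.div continuousOn_const
    ((Real.continuous_sqrt.comp (continuous_const.sub continuous_id)).continuousOn)
  intro s hs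
  rw [Set.uIcc_of_le (by linarith : (0:ℝ) ≤ α/2)] at hs
  have h2 : s ≤ α/2 := hs.2
  have : 0 < α - s := by linarith
  exact (Real.sqrt_pos.2 this).ne'

lemma intInt_rpow_tail {α : ℝ} (hα : 0 < α) :
    IntervalIntegrable (fun s : ℝ => (α - s) ^ (-(1:ℝ)/2)) volume (α/2) α := by
  have base : IntervalIntegrable (fun x : ℝ => x ^ (-(1:ℝ)/2)) volume 0 (α/2) :=
    intervalIntegral.intervalIntegrable_rpow' (by norm_num)
  have h := (base.comp_sub_left α).symm
  have e : α - α / 2 = α / 2 := by ring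
  simpa [e] using h

lemma intInt_right {α : ℝ} (hα : 0 < α) {g : ℝ → ℝ} (hc : Continuous g)
    (h0 : ∀ s, 0 ≤ s → 0 ≤ g s) (h1 : ∀ s, 0 ≤ s → g s ≤ 1) :
    IntervalIntegrable (fun s => Real.sqrt α / Real.sqrt (α - s) * g s) volume (α/2) α := by
  have hmaj : IntervalIntegrable (fun s : ℝ => Real.sqrt α * (α - s) ^ (-(1:ℝ)/2))
      volume (α/2) α := (intInt_rpow_tail hα).const_mul _
  apply hmaj.mono_fun
  · exact ((weight_meas α).mul hc.measurable).aestronglyMeasurable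
  · rw [Set.uIoc_of_le (by linarith : α/2 ≤ α)]
    apply (ae_restrict_iff' measurableSet_Ioc).2
    refine Filter.Eventually.of_forall (fun s hs => ?_)
    have hs0 : 0 < s := lt_of_lt_of_le (by linarith) hs.1.le
    have hαs : 0 ≤ α - s := by linarith [hs.2]
    simp only []
    rw [Real.norm_eq_abs, Real.norm_eq_abs,
      abs_of_nonneg (mul_nonneg (weight_nonneg α s) (h0 s hs0.le)),
      abs_of_nonneg (mul_nonneg (Real.sqrt_nonneg _) (Real.rpow_nonneg hαs _))]
    rw [div_sqrt_eq hαs]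
    calc Real.sqrt α * (α - s) ^ (-(1:ℝ)/2) * g s
        ≤ Real.sqrt α * (α - s) ^ (-(1:ℝ)/2) * 1 := by
          apply mul_le_mul_of_nonneg_left (h1 s hs0.le)
          exact mul_nonneg (Real.sqrt_nonneg _) (Real.rpow_nonneg hαs _)
      _ = Real.sqrt α * (α - s) ^ (-(1:ℝ)/2) := by ring

lemma tail_rpow_integral {α : ℝ} (hα : 0 < α) :
    ∫ s in (α/2)..α, (α - s) ^ (-(1:ℝ)/2) = 2 * (α/2) ^ ((1:ℝ)/2) := by
  rw [intervalIntegral.integral_comp_sub_left (fun x : ℝ => x ^ (-(1:ℝ)/2)) α]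
  have e1 : α - α = 0 := by ring
  have e2 : α - α/2 = α/2 := by ring
  rw [e1, e2, integral_rpow (Or.inl (by norm_num))]
  rw [show (-(1:ℝ)/2 + 1) = (1:ℝ)/2 by norm_num, Real.zero_rpow (by norm_num)]
  ring

lemma bound_eq {α : ℝ} (hα : 0 < α) :
    Real.sqrt α * (α/2) ^ (-(3:ℝ)/2) * (2 * (α/2) ^ ((1:ℝ)/2)) = 4 * α ^ (-(1:ℝ)/2) := by
  have h2 : (0:ℝ) < α/2 := by linarith
  have e : (α/2) ^ (-(3:ℝ)/2) * (α/2) ^ ((1:ℝ)/2) = (α/2)⁻¹ := by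
    rw [← Real.rpow_add h2, show (-(3:ℝ)/2 + (1:ℝ)/2) = (-1:ℝ) by norm_num,
      Real.rpow_neg_one]
  have e2 : α ^ ((1:ℝ)/2) * α⁻¹ = α ^ (-(1:ℝ)/2) := by
    rw [← Real.rpow_neg_one α, ← Real.rpow_add hα]; norm_num
  rw [Real.sqrt_eq_rpow]
  calc α ^ ((1:ℝ)/2) * (α/2) ^ (-(3:ℝ)/2) * (2 * (α/2) ^ ((1:ℝ)/2))
      = 2 * (α ^ ((1:ℝ)/2) * ((α/2) ^ (-(3:ℝ)/2) * (α/2) ^ ((1:ℝ)/2))) := by ring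
    _ = 2 * (α ^ ((1:ℝ)/2) * (α/2)⁻¹) := by rw [e]
    _ = 4 * (α ^ ((1:ℝ)/2) * α⁻¹) := by field_simp; ring
    _ = 4 * α ^ (-(1:ℝ)/2) := by rw [e2]

lemma tail_le {α : ℝ} (hα : 2 ≤ α) {g : ℝ → ℝ} (hc : Continuous g)
    (h0 : ∀ s, 0 ≤ s → 0 ≤ g s) (h1 : ∀ s, 0 ≤ s → g s ≤ 1)
    (hd : ∀ s, 1 ≤ s → g s ≤ s ^ (-(3:ℝ)/2)) :
    ∫ s in (α/2)..α, Real.sqrt α / Real.sqrt (α - s) * g s ≤ 4 * α ^ (-(1:ℝ)/2) := by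
  have hα0 : (0:ℝ) < α := by linarith
  calc ∫ s in (α/2)..α, Real.sqrt α / Real.sqrt (α - s) * g s
      ≤ ∫ s in (α/2)..α, Real.sqrt α * (α/2) ^ (-(3:ℝ)/2) * (α - s) ^ (-(1:ℝ)/2) := by
        apply intervalIntegral.integral_mono_on (by linarith)
          (intInt_right hα0 hc h0 h1) ((intInt_rpow_tail hα0).const_mul _)
        intro s hs
        have hs1 : (1:ℝ) ≤ s := le_trans (by linarith) hs.1
        have hαs : 0 ≤ α - s := by linarith [hs.2]
        rw [div_sqrt_eq hαs]
        have hg : g s ≤ (α/2) ^ (-(3:ℝ)/2) := by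
          refine le_trans (hd s hs1) ?_
          exact Real.rpow_le_rpow_of_nonpos (by linarith) hs.1 (by norm_num)
        calc Real.sqrt α * (α - s) ^ (-(1:ℝ)/2) * g s
            ≤ Real.sqrt α * (α - s) ^ (-(1:ℝ)/2) * ((α/2) ^ (-(3:ℝ)/2)) := by
              apply mul_le_mul_of_nonneg_left hg
              positivity
          _ = Real.sqrt α * (α/2) ^ (-(3:ℝ)/2) * (α - s) ^ (-(1:ℝ)/2) := by ring
    _ = Real.sqrt α * (α/2) ^ (-(3:ℝ)/2) * (2 * (α/2) ^ ((1:ℝ)/2)) := by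
        rw [intervalIntegral.integral_const_mul, tail_rpow_integral hα0]
    _ = 4 * α ^ (-(1:ℝ)/2) := bound_eq hα0

lemma tail_nonneg {α : ℝ} (hα : 0 ≤ α) {g : ℝ → ℝ}
    (h0 : ∀ s, 0 ≤ s → 0 ≤ g s) :
    0 ≤ ∫ s in (α/2)..α, Real.sqrt α / Real.sqrt (α - s) * g s := by
  apply intervalIntegral.integral_nonneg (by linarith)
  intro s hs
  exact mul_nonneg (weight_nonneg α s) (h0 s (le_trans (by linarith) hs.1))

lemma tail_tendsto {g : ℝ → ℝ} (hc : Continuous g)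
    (h0 : ∀ s, 0 ≤ s → 0 ≤ g s) (h1 : ∀ s, 0 ≤ s → g s ≤ 1)
    (hd : ∀ s, 1 ≤ s → g s ≤ s ^ (-(3:ℝ)/2)) :
    Tendsto (fun α => ∫ s in (α/2)..α, Real.sqrt α / Real.sqrt (α - s) * g s)
      atTop (nhds 0) := by
  have hub : Tendsto (fun α : ℝ => 4 * α ^ (-(1:ℝ)/2)) atTop (nhds 0) := by
    have := (tendsto_rpow_neg_atTop (y := (1:ℝ)/2) (by norm_num)).const_mul (4:ℝ)
    rw [mul_zero] at this
    convert this using 3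
    norm_num
  refine tendsto_of_tendsto_of_tendsto_of_le_of_le' tendsto_const_nhds hub ?_ ?_
  · filter_upwards [eventually_ge_atTop (0:ℝ)] with α hα
    exact tail_nonneg hα h0
  · filter_upwards [eventually_ge_atTop (2:ℝ)] with α hα
    exact tail_le hα hc h0 h1 hd

lemma main_part {g : ℝ → ℝ} (hc : Continuous g)
    (h0 : ∀ s, 0 ≤ s → 0 ≤ g s) (h1 : ∀ s, 0 ≤ s → g s ≤ 1)
    (hint : IntegrableOn g (Ioi 0)) :
    Tendsto (fun α : ℝ => ∫ s in (0:ℝ)..(α/2), Real.sqrt α / Real.sqrt (α - s) * g s)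
      atTop (nhds (∫ s in Ioi (0:ℝ), g s)) := by
  have key : Tendsto (fun α : ℝ => ∫ s in Ioi (0:ℝ),
      (Ioc (0:ℝ) (α/2)).indicator (fun s => Real.sqrt α / Real.sqrt (α - s) * g s) s)
      atTop (nhds (∫ s in Ioi (0:ℝ), g s)) := by
    apply tendsto_integral_filter_of_dominated_convergence
      (fun s => Real.sqrt 2 * g s)
    · filter_upwards with α
      exact (((weight_meas α).mul hc.measurable).indicator
        measurableSet_Ioc).aestronglyMeasurable
    · filter_upwards [eventually_gt_atTop (0:ℝ)] with α hα
      refine (ae_restrict_iff' measurableSet_Ioi).2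
        (Filter.Eventually.of_forall fun s hs => ?_)
      by_cases hmem : s ∈ Ioc (0:ℝ) (α/2)
      · rw [Set.indicator_of_mem hmem, Real.norm_eq_abs,
          abs_of_nonneg (mul_nonneg (weight_nonneg α s) (h0 s (le_of_lt hs)))]
        exact mul_le_mul_of_nonneg_right (weight_le_sqrt_two hα hmem.2)
          (h0 s (le_of_lt hs))
      · rw [Set.indicator_of_notMem hmem, norm_zero]
        exact mul_nonneg (Real.sqrt_nonneg 2) (h0 s (le_of_lt hs))
    · exact hint.const_mul _
    · refine (ae_restrict_iff' measurableSet_Ioi).2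
        (Filter.Eventually.of_forall fun s hs => ?_)
      have h := (weight_tendsto (le_of_lt hs)).mul_const (g s)
      rw [one_mul] at h
      apply h.congr'
      filter_upwards [eventually_ge_atTop (2*s)] with α hα
      exact (Set.indicator_of_mem (show s ∈ Ioc (0:ℝ) (α/2) from ⟨hs, by linarith⟩)
        (fun s => Real.sqrt α / Real.sqrt (α - s) * g s)).symm
  apply key.congr'
  filter_upwards [eventually_ge_atTop (0:ℝ)] with α hα
  rw [integral_indicator measurableSet_Ioc, Measure.restrict_restrict measurableSet_Ioc,
    Set.inter_eq_self_of_subset_left Set.Ioc_subset_Ioi_self,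
    intervalIntegral.integral_of_le (by linarith : (0:ℝ) ≤ α/2)]

lemma main_tendsto {g : ℝ → ℝ} (hc : Continuous g)
    (h0 : ∀ s, 0 ≤ s → 0 ≤ g s) (h1 : ∀ s, 0 ≤ s → g s ≤ 1)
    (hd : ∀ s, 1 ≤ s → g s ≤ s ^ (-(3:ℝ)/2))
    (hint : IntegrableOn g (Ioi 0)) :
    Tendsto (fun α : ℝ => ∫ s in (0:ℝ)..α, Real.sqrt α / Real.sqrt (α - s) * g s)
      atTop (nhds (∫ s in Ioi (0:ℝ), g s)) := by
  have h := (main_part hc h0 h1 hint).add (tail_tendsto hc h0 h1 hd)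
  rw [add_zero] at h
  apply h.congr'
  filter_upwards [eventually_gt_atTop (0:ℝ)] with α hα
  exact intervalIntegral.integral_add_adjacent_intervals
    (intInt_left hα hc) (intInt_right hα hc h0 h1)

lemma Ifun_tendsto : Tendsto Ifun atTop (nhds (c₀/2)) := by
  have h := main_tendsto g1_cont (fun s _ => (g1_pos s).le) (fun s _ => g1_le_one s)
    (fun s hs => g1_decay hs) g1_int.integrableOn
  have e : ∫ s in Ioi (0:ℝ), (1+s^2)^(-(5:ℝ)/4) = c₀/2 := by rw [c0_eq]; ring
  rw [e] at h
  exact h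

lemma Jfun_tendsto : Tendsto Jfun atTop (nhds 2) := by
  have hcont : Continuous (fun s : ℝ => s * (1+s^2)^(-(5:ℝ)/4)) := continuous_id.mul g1_cont
  have h := main_tendsto hcont (fun s hs => g2_nonneg hs) (fun s hs => g2_le_one hs)
    (fun s hs => g2_decay hs) g2_intOn
  rw [g2_integral] at h
  exact h


/-- `J(α)/(2I(α)) → c_* = 2/c₀` as `α → ∞`. -/
theorem stmt_13 :
    Tendsto (fun α => Jfun α / (2 * Ifun α)) atTop (nhds cstar) := by
  have hden : Tendsto (fun α => 2 * Ifun α) atTop (nhds (2 * (c₀/2))) :=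
    Ifun_tendsto.const_mul 2
  have hne : 2 * (c₀/2) ≠ 0 := by
    have := c0_pos; intro hx; nlinarith
  have h := Jfun_tendsto.div hden hne
  have e : (2:ℝ) / (2*(c₀/2)) = cstar := by
    rw [cstar]
    have := c0_pos
    field_simp
  rwa [e] at h
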